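/- For each i ∈ I, the quotient map π_i : 𝒢_i → 𝒢 = ⨆_{j∈I} 𝒢_j / ∼ is injective, continuous and open, and induces a homeomorphism of topological spaces from 𝒢_i onto the reduction 𝒢|_{U_i} = d^{-1}(U_i) ∩ r^{-1}(U_i) of the glued space. In particular the structural maps d, r, unit and inverse of 𝒢 are continuous and d, r : 𝒢 → X are open. -/

import Mathlib

/-!
Statement 0: gluing of locally compact groupoids.  We model a (locally compact)
groupoid `𝒢 ⇉ U` over a set of units `U ⊆ X` by a type `A` of arrows together
with (total) structural maps; multiplication is a total function whose value is
only relevant on composable pairs.  The gluing is the quotient of the disjoint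
union `Σ i, A i` by the relation generated by `g ∼ φ_{ji} g`.
-/

universe u v

/-- An (algebraic) groupoid with arrow space `A` over the set of units `U ⊆ X`. -/
structure GroupoidOn (X : Type u) (A : Type v) (U : Set X) where
  d : A → X
  r : A → X
  unit : U → A
  inv : A → A
  mul : A → A → A
  d_mem : ∀ g, d g ∈ U
  r_mem : ∀ g, r g ∈ U
  d_unit : ∀ x : U, d (unit x) = x
  r_unit : ∀ x : U, r (unit x) = x
  d_inv : ∀ g, d (inv g) = r g
  r_inv : ∀ g, r (inv g) = d g
  d_mul : ∀ g h, d g = r h → d (mul g h) = d h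
  r_mul : ∀ g h, d g = r h → r (mul g h) = r g
  mul_assoc' : ∀ g h k, d g = r h → d h = r k → mul (mul g h) k = mul g (mul h k)
  unit_mul : ∀ g, mul (unit ⟨r g, r_mem g⟩) g = g
  mul_unit : ∀ g, mul g (unit ⟨d g, d_mem g⟩) = g
  mul_inv : ∀ g, mul g (inv g) = unit ⟨r g, r_mem g⟩
  inv_mul : ∀ g, mul (inv g) g = unit ⟨d g, d_mem g⟩

namespace GroupoidOn

variable {X : Type u} {A : Type v} {U : Set X}

/-- The reduction set `𝒢|_V = d⁻¹(V) ∩ r⁻¹(V)` of a groupoid to `V ⊆ X`. -/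
def res (G : GroupoidOn X A U) (V : Set X) : Set A :=
  {g | G.d g ∈ V ∧ G.r g ∈ V}

end GroupoidOn

/-- `G` is a topological groupoid: continuous structural maps, `d` surjective
(onto the units) and open. Together with local compactness of the arrow and unit
spaces this is the notion of a locally compact groupoid. -/
structure IsTopGroupoid {X : Type u} {A : Type v} {U : Set X}
    [TopologicalSpace X] [TopologicalSpace A] (G : GroupoidOn X A U) : Prop where
  continuous_d : Continuous G.d
  continuous_r : Continuous G.r
  continuous_unit : Continuous G.unit
  continuous_inv : Continuous G.inv
  continuousOn_mul : ContinuousOn (fun p : A × A => G.mul p.1 p.2)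
    {p : A × A | G.d p.1 = G.r p.2}
  d_surj : U ⊆ Set.range G.d
  isOpenMap_d : IsOpenMap G.d

/-- The data needed to glue a family of locally compact groupoids `𝒢_i ⇉ U_i`
over an open cover `(U_i)` of `X`, via compatible isomorphisms
`φ_{ij} : 𝒢_i|_{U_i ∩ U_j} → 𝒢_j|_{U_i ∩ U_j}` of topological groupoids. -/
structure GluingData (X : Type u) [TopologicalSpace X] (I : Type v)
    (U : I → Set X) (A : I → Type u) [∀ i, TopologicalSpace (A i)] where
  G : ∀ i, GroupoidOn X (A i) (U i)
  top : ∀ i, IsTopGroupoid (G i)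
  open_U : ∀ i, IsOpen (U i)
  cover : ∀ x : X, ∃ i, x ∈ U i
  φ : ∀ i j, A i → A j
  φ_mapsTo : ∀ i j, Set.MapsTo (φ i j) ((G i).res (U i ∩ U j)) ((G j).res (U i ∩ U j))
  φ_d : ∀ i j, ∀ g ∈ (G i).res (U i ∩ U j), (G j).d (φ i j g) = (G i).d g
  φ_r : ∀ i j, ∀ g ∈ (G i).res (U i ∩ U j), (G j).r (φ i j g) = (G i).r g
  φ_unit : ∀ i j, ∀ (x : X) (hx : x ∈ U i ∩ U j),
    φ i j ((G i).unit ⟨x, hx.1⟩) = (G j).unit ⟨x, hx.2⟩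
  φ_inv : ∀ i j, ∀ g ∈ (G i).res (U i ∩ U j), φ i j ((G i).inv g) = (G j).inv (φ i j g)
  φ_mul : ∀ i j, ∀ g h, g ∈ (G i).res (U i ∩ U j) → h ∈ (G i).res (U i ∩ U j) →
    (G i).d g = (G i).r h →
    φ i j ((G i).mul g h) = (G j).mul (φ i j g) (φ i j h)
  φ_id : ∀ i g, φ i i g = g
  φ_symm : ∀ i j, ∀ g ∈ (G i).res (U i ∩ U j), φ j i (φ i j g) = g
  φ_trans : ∀ i j k, ∀ g ∈ (G i).res (U i ∩ U j ∩ U k), φ j k (φ i j g) = φ i k g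
  φ_cont : ∀ i j, ContinuousOn (φ i j) ((G i).res (U i ∩ U j))

namespace GluingData

variable {X : Type u} [TopologicalSpace X] {I : Type v}
  {U : I → Set X} {A : I → Type u} [∀ i, TopologicalSpace (A i)]

/-- The relation `g ∼ φ_{ij} g` on the disjoint union of the arrow spaces. -/
def Rel (D : GluingData X I U A) : (Σ i, A i) → (Σ i, A i) → Prop :=
  fun p q => p.2 ∈ (D.G p.1).res (U p.1 ∩ U q.1) ∧ D.φ p.1 q.1 p.2 = q.2

/-- The glued space `𝒢 = ⨆ᵢ 𝒢ᵢ / ∼`, with the quotient topology. -/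
def Glued (D : GluingData X I U A) : Type max u v :=
  Quot D.Rel

instance (D : GluingData X I U A) : TopologicalSpace D.Glued :=
  inferInstanceAs (TopologicalSpace (Quot D.Rel))

/-- The canonical quotient map `π_i : 𝒢_i → 𝒢`. -/
def π (D : GluingData X I U A) (i : I) (g : A i) : D.Glued :=
  Quot.mk D.Rel ⟨i, g⟩

end GluingData

section Aux

namespace GroupoidOn

variable {X : Type u} {A : Type v} {U : Set X}

lemma inv_inv' (G : GroupoidOn X A U) (g : A) : G.inv (G.inv g) = g := by
  have h1 : G.unit ⟨G.d (G.inv (G.inv g)), G.d_mem _⟩ = G.mul (G.inv g) g := by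
    rw [G.inv_mul g]
    exact congrArg G.unit (Subtype.ext
      (show G.d (G.inv (G.inv g)) = G.d g by rw [G.d_inv, G.r_inv]))
  calc G.inv (G.inv g)
      = G.mul (G.inv (G.inv g)) (G.unit ⟨G.d (G.inv (G.inv g)), G.d_mem _⟩) :=
        (G.mul_unit _).symm
    _ = G.mul (G.inv (G.inv g)) (G.mul (G.inv g) g) := by rw [h1]
    _ = G.mul (G.mul (G.inv (G.inv g)) (G.inv g)) g :=
        (G.mul_assoc' _ _ _ (G.d_inv (G.inv g)) (G.d_inv g)).symm
    _ = G.mul (G.unit ⟨G.d (G.inv g), G.d_mem _⟩) g := by rw [G.inv_mul (G.inv g)]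
    _ = G.mul (G.unit ⟨G.r g, G.r_mem g⟩) g := by
        rw [show (⟨G.d (G.inv g), G.d_mem _⟩ : U) = ⟨G.r g, G.r_mem g⟩ from
          Subtype.ext (G.d_inv g)]
    _ = g := G.unit_mul g

lemma mem_res_iff (G : GroupoidOn X A U) {V : Set X} (g : A) :
    g ∈ G.res (U ∩ V) ↔ G.d g ∈ V ∧ G.r g ∈ V := by
  constructor
  · rintro ⟨⟨-, h1⟩, ⟨-, h2⟩⟩; exact ⟨h1, h2⟩
  · rintro ⟨h1, h2⟩; exact ⟨⟨G.d_mem g, h1⟩, ⟨G.r_mem g, h2⟩⟩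

lemma isOpenMap_inv {G : GroupoidOn X A U} [TopologicalSpace X] [TopologicalSpace A]
    (hG : IsTopGroupoid G) : IsOpenMap G.inv := by
  intro V hV
  have : G.inv '' V = G.inv ⁻¹' V := by
    ext x
    constructor
    · rintro ⟨g, hg, rfl⟩; rwa [Set.mem_preimage, G.inv_inv']
    · intro hx; exact ⟨G.inv x, hx, G.inv_inv' x⟩
  rw [this]
  exact hV.preimage hG.continuous_inv

lemma isOpenMap_r {G : GroupoidOn X A U} [TopologicalSpace X] [TopologicalSpace A]
    (hG : IsTopGroupoid G) : IsOpenMap G.r := by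
  have : G.r = G.d ∘ G.inv := by
    funext g; exact (G.d_inv g).symm
  rw [this]
  exact hG.isOpenMap_d.comp (isOpenMap_inv hG)

end GroupoidOn

namespace GluingData

variable {X : Type u} [TopologicalSpace X] {I : Type v}
  {U : I → Set X} {A : I → Type u} [∀ i, TopologicalSpace (A i)]
  (D : GluingData X I U A)

lemma rel_d {p q : Σ i, A i} (h : D.Rel p q) :
    (D.G q.1).d q.2 = (D.G p.1).d p.2 := by
  obtain ⟨hm, he⟩ := h
  rw [← he, D.φ_d _ _ _ hm]

lemma rel_r {p q : Σ i, A i} (h : D.Rel p q) :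
    (D.G q.1).r q.2 = (D.G p.1).r p.2 := by
  obtain ⟨hm, he⟩ := h
  rw [← he, D.φ_r _ _ _ hm]

/-- The induced domain map on the glued space. -/
def dd : D.Glued → X :=
  Quot.lift (fun p => (D.G p.1).d p.2) (fun _ _ h => (D.rel_d h).symm)

/-- The induced range map on the glued space. -/
def rr : D.Glued → X :=
  Quot.lift (fun p => (D.G p.1).r p.2) (fun _ _ h => (D.rel_r h).symm)

@[simp] lemma dd_π (i : I) (g : A i) : D.dd (D.π i g) = (D.G i).d g := rfl
@[simp] lemma rr_π (i : I) (g : A i) : D.rr (D.π i g) = (D.G i).r g := rfl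

/-- The induced inverse map on the glued space. -/
def ii : D.Glued → D.Glued :=
  Quot.lift (fun p => D.π p.1 ((D.G p.1).inv p.2)) (by
    rintro ⟨j, g⟩ ⟨k, h⟩ ⟨hm, he⟩
    refine Quot.sound ⟨⟨?_, ?_⟩, ?_⟩
    · rw [(D.G j).d_inv]; exact hm.2
    · rw [(D.G j).r_inv]; exact hm.1
    · rw [D.φ_inv j k g hm, he])

@[simp] lemma ii_π (i : I) (g : A i) : D.ii (D.π i g) = D.π i ((D.G i).inv g) := rfl

open Classical in
/-- Partial retraction used to prove injectivity of `π i`. -/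
noncomputable def rho (i : I) (p : Σ j, A j) : Option (A i) :=
  if (D.G p.1).d p.2 ∈ U i ∧ (D.G p.1).r p.2 ∈ U i then some (D.φ p.1 i p.2) else none

lemma rho_rel (i : I) {p q : Σ j, A j} (h : D.Rel p q) : D.rho i p = D.rho i q := by
  obtain ⟨hm, he⟩ := h
  have hd : (D.G q.1).d q.2 = (D.G p.1).d p.2 := D.rel_d ⟨hm, he⟩
  have hr : (D.G q.1).r q.2 = (D.G p.1).r p.2 := D.rel_r ⟨hm, he⟩
  unfold rho
  rw [hd, hr]
  by_cases hc : (D.G p.1).d p.2 ∈ U i ∧ (D.G p.1).r p.2 ∈ U i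
  · rw [if_pos hc, if_pos hc]
    congr 1
    rw [← he, D.φ_trans p.1 q.1 i p.2 ⟨⟨hm.1, hc.1⟩, ⟨hm.2, hc.2⟩⟩]
  · rw [if_neg hc, if_neg hc]

/-- The retraction descends to the glued space. -/
noncomputable def rhoBar (i : I) : D.Glued → Option (A i) :=
  Quot.lift (D.rho i) (fun _ _ h => D.rho_rel i h)

lemma rhoBar_π (i : I) (g : A i) : D.rhoBar i (D.π i g) = some g := by
  show D.rho i ⟨i, g⟩ = some g
  unfold rho
  rw [if_pos ⟨(D.G i).d_mem g, (D.G i).r_mem g⟩, D.φ_id]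

lemma π_injective (i : I) : Function.Injective (D.π i) := by
  intro g g' h
  have := congrArg (D.rhoBar i) h
  rw [D.rhoBar_π, D.rhoBar_π] at this
  exact Option.some_injective _ this

lemma π_eq_of_mem (i j : I) (g : A j) (hd : (D.G j).d g ∈ U i) (hr : (D.G j).r g ∈ U i) :
    D.π j g = D.π i (D.φ j i g) :=
  Quot.sound ⟨⟨⟨(D.G j).d_mem g, hd⟩, ⟨(D.G j).r_mem g, hr⟩⟩, rfl⟩

lemma continuous_π (i : I) : Continuous (D.π i) :=
  (continuous_quot_mk (r := D.Rel)).comp continuous_sigmaMk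

lemma res_eq (i j : I) :
    (D.G j).res (U j ∩ U i) = {g : A j | (D.G j).d g ∈ U i ∧ (D.G j).r g ∈ U i} := by
  ext g; exact (D.G j).mem_res_iff g

lemma isOpen_res (i j : I) : IsOpen ((D.G j).res (U j ∩ U i)) := by
  rw [D.res_eq]
  exact (((D.top j).continuous_d.isOpen_preimage _ (D.open_U i)).inter
    ((D.top j).continuous_r.isOpen_preimage _ (D.open_U i)))

lemma isOpenMap_π (i : I) : IsOpenMap (D.π i) := by
  intro V hV
  refine (isQuotientMap_quot_mk (r := D.Rel)).isOpen_preimage.mp ?_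
  · rw [isOpen_sigma_iff]
    intro j
    have hset : Sigma.mk j ⁻¹' (Quot.mk D.Rel ⁻¹' (D.π i '' V)) =
        (D.G j).res (U j ∩ U i) ∩ (D.φ j i) ⁻¹' V := by
      ext h
      simp only [Set.mem_preimage, Set.mem_inter_iff]
      constructor
      · rintro ⟨g, hg, heq⟩
        have := congrArg (D.rhoBar i) heq
        rw [D.rhoBar_π] at this
        have hrho : D.rho i ⟨j, h⟩ = some g := this.symm
        unfold rho at hrho
        by_cases hc : (D.G j).d h ∈ U i ∧ (D.G j).r h ∈ U i
        · rw [if_pos hc] at hrho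
          refine ⟨((D.G j).mem_res_iff h).mpr hc, ?_⟩
          rw [Option.some_inj.mp hrho]; exact hg
        · rw [if_neg hc] at hrho; exact absurd hrho (by simp)
      · rintro ⟨hmem, hφ⟩
        have hc := ((D.G j).mem_res_iff h).mp hmem
        exact ⟨D.φ j i h, hφ, (D.π_eq_of_mem i j h hc.1 hc.2).symm⟩
    exact (congrArg IsOpen hset).mpr
      ((D.φ_cont j i).isOpen_inter_preimage (D.isOpen_res i j) hV)

lemma range_π (i : I) :
    Set.range (D.π i) = {γ : D.Glued | D.dd γ ∈ U i ∧ D.rr γ ∈ U i} := by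
  ext γ
  constructor
  · rintro ⟨g, rfl⟩
    exact ⟨(D.G i).d_mem g, (D.G i).r_mem g⟩
  · rintro ⟨hd, hr⟩
    obtain ⟨⟨j, g⟩, rfl⟩ := Quot.exists_rep γ
    exact ⟨D.φ j i g, (D.π_eq_of_mem i j g hd hr).symm⟩

lemma continuous_dd : Continuous D.dd := by
  exact continuous_coinduced_dom.mpr (continuous_sigma fun j => (D.top j).continuous_d)

lemma continuous_rr : Continuous D.rr :=
  continuous_coinduced_dom.mpr (continuous_sigma fun j => (D.top j).continuous_r)

lemma continuous_ii : Continuous D.ii :=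
  continuous_coinduced_dom.mpr (continuous_sigma fun j =>
    (D.continuous_π j).comp (D.top j).continuous_inv)

lemma isOpenMap_lift {Y : Type*} [TopologicalSpace Y] (f : D.Glued → Y)
    (hf : ∀ j, IsOpenMap (fun g : A j => f (D.π j g))) : IsOpenMap f := by
  intro W hW
  have hT : IsOpen (Quot.mk D.Rel ⁻¹' W) :=
    hW.preimage (continuous_quot_mk (r := D.Rel))
  have himg : f '' W =
      ⋃ j, (fun g : A j => f (D.π j g)) '' (Sigma.mk j ⁻¹' (Quot.mk D.Rel ⁻¹' W)) := by
    ext x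
    simp only [Set.mem_image, Set.mem_iUnion, Set.mem_preimage]
    constructor
    · rintro ⟨w, hw, rfl⟩
      obtain ⟨⟨j, g⟩, rfl⟩ := Quot.exists_rep w
      exact ⟨j, g, hw, rfl⟩
    · rintro ⟨j, g, hg, rfl⟩
      exact ⟨D.π j g, hg, rfl⟩
  rw [himg]
  exact isOpen_iUnion fun j => hf j _ (isOpen_sigma_iff.mp hT j)

lemma isOpenMap_dd : IsOpenMap D.dd :=
  D.isOpenMap_lift D.dd fun j => (D.top j).isOpenMap_d

lemma isOpenMap_rr : IsOpenMap D.rr :=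
  D.isOpenMap_lift D.rr fun j => GroupoidOn.isOpenMap_r (D.top j)

/-- The induced unit map on the glued space. -/
noncomputable def uu (x : X) : D.Glued :=
  D.π (D.cover x).choose ((D.G (D.cover x).choose).unit ⟨x, (D.cover x).choose_spec⟩)

lemma π_unit_eq (i j : I) (x : X) (hi : x ∈ U i) (hj : x ∈ U j) :
    D.π i ((D.G i).unit ⟨x, hi⟩) = D.π j ((D.G j).unit ⟨x, hj⟩) := by
  refine Quot.sound ⟨⟨?_, ?_⟩, ?_⟩
  · rw [(D.G i).d_unit ⟨x, hi⟩]; exact ⟨hi, hj⟩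
  · rw [(D.G i).r_unit ⟨x, hi⟩]; exact ⟨hi, hj⟩
  · exact D.φ_unit i j x ⟨hi, hj⟩

lemma uu_spec (i : I) (x : X) (hx : x ∈ U i) :
    D.uu x = D.π i ((D.G i).unit ⟨x, hx⟩) :=
  D.π_unit_eq _ i x (D.cover x).choose_spec hx

lemma continuous_uu : Continuous D.uu := by
  rw [continuous_iff_continuousAt]
  intro x
  obtain ⟨i, hi⟩ := D.cover x
  have hco : ContinuousOn D.uu (U i) := by
    rw [continuousOn_iff_continuous_restrict]
    have heq : (U i).domRestrict D.uu = fun y : U i => D.π i ((D.G i).unit y) := by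
      funext y
      exact D.uu_spec i y y.2
    rw [heq]
    exact (D.continuous_π i).comp (D.top i).continuous_unit
  exact hco.continuousAt ((D.open_U i).mem_nhds hi)

end GluingData

end Aux

/-- For each `i ∈ I`, the quotient map `π_i : 𝒢_i → 𝒢` is
injective, continuous and open, and induces a homeomorphism from `𝒢_i` onto
the reduction `𝒢|_{U_i} = d⁻¹(U_i) ∩ r⁻¹(U_i)` of the glued space (i.e. it is,
moreover, a bijection onto that reduction).  In particular the induced
structural maps `d`, `r`, `unit`, `inv` of `𝒢` are well defined and continuous,
and `d, r : 𝒢 → X` are open. -/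
theorem statement_0
    {X : Type u} [TopologicalSpace X] [LocallyCompactSpace X] [T2Space X]
    {I : Type v} {U : I → Set X} {A : I → Type u} [∀ i, TopologicalSpace (A i)]
    [∀ i, LocallyCompactSpace (A i)]
    (D : GluingData X I U A) :
    ∃ (dd rr : D.Glued → X) (uu : X → D.Glued) (ii : D.Glued → D.Glued),
      -- the structural maps are induced by those of the `𝒢_i`:
      (∀ i g, dd (D.π i g) = (D.G i).d g) ∧
      (∀ i g, rr (D.π i g) = (D.G i).r g) ∧
      (∀ (i) (x : X) (hx : x ∈ U i), uu x = D.π i ((D.G i).unit ⟨x, hx⟩)) ∧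
      (∀ i g, ii (D.π i g) = D.π i ((D.G i).inv g)) ∧
      -- each `π_i` is injective, continuous, open, and a homeomorphism onto
      -- the reduction `𝒢|_{U_i}`:
      (∀ i, Function.Injective (D.π i)) ∧
      (∀ i, Continuous (D.π i)) ∧
      (∀ i, IsOpenMap (D.π i)) ∧
      (∀ i, Set.range (D.π i) = {γ : D.Glued | dd γ ∈ U i ∧ rr γ ∈ U i}) ∧
      -- the structural maps are continuous and `d`, `r` are open:
      Continuous dd ∧ Continuous rr ∧ IsOpenMap dd ∧ IsOpenMap rr ∧
      Continuous uu ∧ Continuous ii := by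
  exact ⟨D.dd, D.rr, D.uu, D.ii,
    D.dd_π, D.rr_π, D.uu_spec, D.ii_π,
    D.π_injective, D.continuous_π, D.isOpenMap_π, D.range_π,
    D.continuous_dd, D.continuous_rr, D.isOpenMap_dd, D.isOpenMap_rr,
    D.continuous_uu, D.continuous_ii⟩
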